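/- The assignment S ↦ E_S is a bijection from the collection of subsets S ⊆ {2, …, n} with ∑_{i ∈ S} w_i > 1 onto the collection of nonempty 1-connected flats of the graphic matroid M(w) of the reduced weight graph G(w). -/

import Mathlib

open Finset

/-- The reduced weight graph `G(w)`: vertices are `{2, …, n}` (as natural numbers),
and distinct `i, j ∈ {2, …, n}` are adjacent iff `w i + w j > 1`. -/
def redGraph (n : ℕ) (w : ℕ → ℚ) : SimpleGraph ℕ where
  Adj i j := i ≠ j ∧ (2 ≤ i ∧ i ≤ n) ∧ (2 ≤ j ∧ j ≤ n) ∧ 1 < w i + w j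
  symm := by
    constructor
    intro i j h
    exact ⟨h.1.symm, h.2.2.1, h.2.1, by rw [add_comm]; exact h.2.2.2⟩
  loopless := by constructor; intro i h; exact h.1 rfl

/-- `E_S`: the set of edges of `G(w)` with both endpoints in `S`. -/
def edgesIn (n : ℕ) (w : ℕ → ℚ) (S : Set ℕ) : Set (Sym2 ℕ) :=
  {e ∈ (redGraph n w).edgeSet | ∀ v ∈ e, v ∈ S}

/-- A set `F` of edges of `G(w)` is a *flat* of the graphic matroid `M(w)` if for
every edge `{u, v}` of `G(w)` not in `F`, the vertices `u` and `v` are not joined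
by a walk using only edges of `F`. -/
def IsFlat (n : ℕ) (w : ℕ → ℚ) (F : Set (Sym2 ℕ)) : Prop :=
  F ⊆ (redGraph n w).edgeSet ∧
    ∀ u v : ℕ, (redGraph n w).Adj u v → s(u, v) ∉ F →
      ¬ (SimpleGraph.fromEdgeSet F).Reachable u v

/-- The set of endpoints of edges in `F`. -/
def edgeSupport (F : Set (Sym2 ℕ)) : Set ℕ := {v | ∃ e ∈ F, v ∈ e}

/-- A flat `F` is *1-connected* if the subgraph of `G(w)` with edge set `F` and
vertex set the endpoints of edges of `F` is connected. -/
def OneConnected (F : Set (Sym2 ℕ)) : Prop :=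
  ((SimpleGraph.fromEdgeSet F).induce (edgeSupport F)).Connected


section aux

variable {n m : ℕ} {ε : ℚ} {w : ℕ → ℚ}

structure Setup (n m : ℕ) (ε : ℚ) (w : ℕ → ℚ) : Prop where
  hm : 2 ≤ m
  hmn : m < n
  hε0 : 0 < ε
  hε1 : ε < 1 / ((n : ℚ) - m)
  hw : ∀ i, 1 ≤ i → i ≤ n → w i = if i ≤ m then 1 else ε

/-- A vertex not in any edge of `F` reaches nothing else. -/
lemma not_reachable_isolated {F : Set (Sym2 ℕ)} {u v : ℕ}
    (hu : ∀ e ∈ F, u ∉ e) (huv : u ≠ v) :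
    ¬ (SimpleGraph.fromEdgeSet F).Reachable u v := by
  intro hr
  obtain ⟨p⟩ := hr
  cases p with
  | nil => exact huv rfl
  | cons hadj _ =>
    rw [SimpleGraph.fromEdgeSet_adj] at hadj
    exact hu _ hadj.1 (by simp)

namespace Setup

variable (h : Setup n m ε w)
include h

lemma nm_pos : (0:ℚ) < (n:ℚ) - m := by
  have := h.hmn; have : (m:ℚ) < n := by exact_mod_cast this
  linarith

lemma eps_lt_one : ε < 1 := by
  have h1 : (1:ℚ) ≤ (n:ℚ) - m := by
    have := h.hmn
    have : (m:ℚ) + 1 ≤ n := by exact_mod_cast this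
    linarith
  have := h.hε1
  have h2 : 1 / ((n:ℚ) - m) ≤ 1 := by
    rw [div_le_one (by linarith)]; linarith
  linarith

lemma wpos {i : ℕ} (h2 : 2 ≤ i) (hin : i ≤ n) : 0 < w i := by
  rw [h.hw i (by omega) hin]; split_ifs
  · norm_num
  · exact h.hε0

lemma wle1 {i : ℕ} (h2 : 2 ≤ i) (hin : i ≤ n) : w i ≤ 1 := by
  rw [h.hw i (by omega) hin]; split_ifs
  · exact le_refl _
  · exact (h.eps_lt_one).le

lemma heavy_w {i : ℕ} (h1 : 1 ≤ i) (him : i ≤ m) : w i = 1 := by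
  rw [h.hw i h1 (by have := h.hmn; omega), if_pos him]

lemma light_w {i : ℕ} (him : m < i) (hin : i ≤ n) : w i = ε := by
  rw [h.hw i (by omega) hin, if_neg (by omega)]

lemma adj_iff {i j : ℕ} :
    (redGraph n w).Adj i j ↔ i ≠ j ∧ (2 ≤ i ∧ i ≤ n) ∧ (2 ≤ j ∧ j ≤ n) ∧ (i ≤ m ∨ j ≤ m) := by
  constructor
  · rintro ⟨hne, hi, hj, hsum⟩
    refine ⟨hne, hi, hj, ?_⟩
    by_contra hc
    push_neg at hc
    obtain ⟨hmi, hmj⟩ := hc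
    rw [h.light_w (by omega) hi.2, h.light_w (by omega) hj.2] at hsum
    -- 1 < ε + ε, but n - m ≥ 2 so ε < 1/2
    have hnm2 : (2:ℚ) ≤ (n:ℚ) - m := by
      have : m + 2 ≤ n := by omega
      have : (m:ℚ) + 2 ≤ n := by exact_mod_cast this
      linarith
    have := h.hε1
    have : 1 / ((n:ℚ) - m) ≤ 1/2 := by
      apply one_div_le_one_div_of_le <;> linarith
    linarith
  · rintro ⟨hne, hi, hj, hc⟩
    refine ⟨hne, hi, hj, ?_⟩
    rcases hc with hc | hc
    · rw [h.heavy_w (by omega) hc]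
      have := h.wpos hj.1 hj.2; linarith
    · rw [h.heavy_w (by omega : 1 ≤ j) hc]
      have := h.wpos hi.1 hi.2; linarith


/-- From `1 < ∑ w i` extract a heavy element and a second element. -/
lemma ex_heavy_pair {S : Finset ℕ} (hS : S ⊆ Finset.Icc 2 n) (hsum : 1 < ∑ i ∈ S, w i) :
    ∃ i ∈ S, ∃ j ∈ S, i ≤ m ∧ i ≠ j := by
  have hmem : ∀ i ∈ S, 2 ≤ i ∧ i ≤ n := by
    intro i hi; exact Finset.mem_Icc.mp (hS hi)
  -- a heavy element exists
  obtain ⟨i, hiS, him⟩ : ∃ i ∈ S, i ≤ m := by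
    by_contra hc
    push_neg at hc
    have hle : ∑ i ∈ S, w i ≤ ((Finset.Icc (m+1) n).card : ℚ) * ε := by
      calc ∑ i ∈ S, w i ≤ ∑ i ∈ S, ε := by
            apply Finset.sum_le_sum
            intro i hi
            rw [h.light_w (hc i hi) (hmem i hi).2]
          _ = S.card * ε := by rw [Finset.sum_const, nsmul_eq_mul]
          _ ≤ (Finset.Icc (m+1) n).card * ε := by
            apply mul_le_mul_of_nonneg_right _ h.hε0.le
            have hsub : S ⊆ Finset.Icc (m+1) n := by
              intro i hi
              exact Finset.mem_Icc.mpr ⟨by have := hc i hi; omega, (hmem i hi).2⟩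
            exact_mod_cast Finset.card_le_card hsub
    rw [Nat.card_Icc] at hle
    have hcard : ((n + 1 - (m + 1) : ℕ) : ℚ) = (n:ℚ) - m := by
      have hmn := h.hmn
      have : n + 1 - (m + 1) = n - m := by omega
      rw [this, Nat.cast_sub (by omega : m ≤ n)]
    rw [hcard] at hle
    have hlt : ((n:ℚ) - m) * ε < 1 := by
      have := h.hε1
      have h0 := h.nm_pos
      calc ((n:ℚ) - m) * ε < ((n:ℚ) - m) * (1 / ((n:ℚ) - m)) :=
            mul_lt_mul_of_pos_left this h0
        _ = 1 := by field_simp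
    linarith
  refine ⟨i, hiS, ?_⟩
  by_contra hc
  push_neg at hc
  have hsub : S ⊆ {i} := by
    intro j hj
    simp only [Finset.mem_singleton]
    exact (hc j hj him).symm
  have : ∑ j ∈ S, w j ≤ ∑ j ∈ ({i} : Finset ℕ), w j := by
    apply Finset.sum_le_sum_of_subset_of_nonneg hsub
    intro j hj _
    rw [Finset.mem_singleton] at hj
    rw [hj]
    exact (h.wpos (hmem i hiS).1 (hmem i hiS).2).le
  rw [Finset.sum_singleton] at this
  have := h.wle1 (hmem i hiS).1 (hmem i hiS).2
  linarith


variable {S : Finset ℕ} (hS : S ⊆ Finset.Icc 2 n)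
include hS

lemma mem_edgesIn {u v : ℕ} (hu : u ∈ S) (hv : v ∈ S) (huv : u ≠ v)
    (hh : u ≤ m ∨ v ≤ m) : s(u, v) ∈ edgesIn n w (↑S : Set ℕ) := by
  have hu' := Finset.mem_Icc.mp (hS hu)
  have hv' := Finset.mem_Icc.mp (hS hv)
  constructor
  · rw [SimpleGraph.mem_edgeSet, h.adj_iff]
    exact ⟨huv, hu', hv', hh⟩
  · intro x hx
    rw [Sym2.mem_iff] at hx
    rcases hx with rfl | rfl <;> simpa

lemma support_edgesIn {i₀ j₀ : ℕ} (hi₀ : i₀ ∈ S) (him : i₀ ≤ m) (hj₀ : j₀ ∈ S)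
    (hne : i₀ ≠ j₀) : edgeSupport (edgesIn n w (↑S : Set ℕ)) = (↑S : Set ℕ) := by
  ext v
  constructor
  · rintro ⟨e, he, hve⟩
    exact he.2 v hve
  · intro hv
    simp only [Finset.mem_coe] at hv
    by_cases hvi : v = i₀
    · exact ⟨s(i₀, j₀), h.mem_edgesIn hS hi₀ hj₀ hne (Or.inl him), by simp [hvi]⟩
    · exact ⟨s(v, i₀), h.mem_edgesIn hS hv hi₀ hvi (Or.inr him), by simp⟩

omit h hS in
lemma edgesIn_flat : IsFlat n w (edgesIn n w (↑S : Set ℕ)) := by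
  constructor
  · intro e he; exact he.1
  · intro u v hadj hne hr
    have huv : u ≠ v := hadj.1
    have hnot : ¬ ∀ x ∈ s(u, v), x ∈ (↑S : Set ℕ) := by
      intro hall
      exact hne ⟨(SimpleGraph.mem_edgeSet _).mpr hadj, hall⟩
    push_neg at hnot
    obtain ⟨x, hxe, hxS⟩ := hnot
    rw [Sym2.mem_iff] at hxe
    have key : ∀ y, y ∉ (↑S : Set ℕ) → ∀ e ∈ edgesIn n w (↑S : Set ℕ), y ∉ e := by
      intro y hy e he hye
      exact hy (he.2 y hye)
    rcases hxe with rfl | rfl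
    · exact not_reachable_isolated (key x hxS) huv hr
    · exact not_reachable_isolated (key x hxS) huv.symm hr.symm

lemma edgesIn_oneConnected {i₀ j₀ : ℕ} (hi₀ : i₀ ∈ S) (him : i₀ ≤ m) (hj₀ : j₀ ∈ S)
    (hne : i₀ ≠ j₀) : OneConnected (edgesIn n w (↑S : Set ℕ)) := by
  unfold OneConnected
  rw [h.support_edgesIn hS hi₀ him hj₀ hne]
  set G := (SimpleGraph.fromEdgeSet (edgesIn n w (↑S : Set ℕ))).induce (↑S : Set ℕ) with hG
  have hreach : ∀ x : (↑S : Set ℕ), G.Reachable x ⟨i₀, by simpa using hi₀⟩ := by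
    rintro ⟨x, hx⟩
    by_cases hxi : x = i₀
    · subst hxi; exact SimpleGraph.Reachable.refl _
    · apply SimpleGraph.Adj.reachable
      show (SimpleGraph.fromEdgeSet (edgesIn n w (↑S : Set ℕ))).Adj x i₀
      rw [SimpleGraph.fromEdgeSet_adj]
      exact ⟨h.mem_edgesIn hS (by simpa using hx) hi₀ hxi (Or.inr him), hxi⟩
  rw [SimpleGraph.connected_iff]
  refine ⟨fun x y => (hreach x).trans (hreach y).symm, ⟨⟨i₀, by simpa using hi₀⟩⟩⟩

omit hS in
lemma surj_aux {F : Set (Sym2 ℕ)} (hFne : F.Nonempty) (hflat : IsFlat n w F)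
    (hconn : OneConnected F) :
    ∃ S : Finset ℕ, (S ⊆ Finset.Icc 2 n ∧ 1 < ∑ i ∈ S, w i) ∧
      edgesIn n w (↑S : Set ℕ) = F := by
  classical
  have hsupp : ∀ v ∈ edgeSupport F, 2 ≤ v ∧ v ≤ n := by
    rintro v ⟨e, he, hve⟩
    have hE := hflat.1 he
    revert hE hve
    induction e using Sym2.ind with
    | _ a b =>
      intro hve hE
      rw [SimpleGraph.mem_edgeSet] at hE
      rw [Sym2.mem_iff] at hve
      rcases hve with rfl | rfl
      · exact hE.2.1
      · exact hE.2.2.1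
  refine ⟨Finset.filter (fun v => v ∈ edgeSupport F) (Finset.Icc 2 n), ⟨?_, ?_⟩, ?_⟩
  · exact Finset.filter_subset _ _
  case _ =>
    -- sum exceeds 1
    obtain ⟨e, he⟩ := hFne
    have hE := hflat.1 he
    revert hE he
    induction e using Sym2.ind with
    | _ a b =>
      intro he hE
      rw [SimpleGraph.mem_edgeSet] at hE
      have haS : a ∈ Finset.filter (fun v => v ∈ edgeSupport F) (Finset.Icc 2 n) := by
        refine Finset.mem_filter.mpr ⟨Finset.mem_Icc.mpr hE.2.1, ⟨s(a,b), he, by simp⟩⟩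
      have hbS : b ∈ Finset.filter (fun v => v ∈ edgeSupport F) (Finset.Icc 2 n) := by
        refine Finset.mem_filter.mpr ⟨Finset.mem_Icc.mpr hE.2.2.1, ⟨s(a,b), he, by simp⟩⟩
      have hpair : ({a, b} : Finset ℕ) ⊆
          Finset.filter (fun v => v ∈ edgeSupport F) (Finset.Icc 2 n) := by
        intro x hx
        rw [Finset.mem_insert, Finset.mem_singleton] at hx
        rcases hx with rfl | rfl <;> assumption
      have hle : ∑ i ∈ ({a, b} : Finset ℕ), w i ≤
          ∑ i ∈ Finset.filter (fun v => v ∈ edgeSupport F) (Finset.Icc 2 n), w i := by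
        apply Finset.sum_le_sum_of_subset_of_nonneg hpair
        intro i hi _
        have := Finset.mem_Icc.mp (Finset.mem_filter.mp hi).1
        exact (h.wpos this.1 this.2).le
      rw [Finset.sum_pair hE.1] at hle
      linarith [hE.2.2.2]
  case _ =>
    -- edgesIn recovers F
    have hcoe : (↑(Finset.filter (fun v => v ∈ edgeSupport F) (Finset.Icc 2 n)) : Set ℕ)
        = edgeSupport F := by
      ext v
      simp only [Finset.coe_filter, Finset.mem_Icc, Set.mem_setOf_eq]
      constructor
      · rintro ⟨_, hv⟩; exact hv
      · intro hv; exact ⟨hsupp v hv, hv⟩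
    rw [show edgesIn n w (↑(Finset.filter (fun v => v ∈ edgeSupport F) (Finset.Icc 2 n)) : Set ℕ)
        = edgesIn n w (edgeSupport F) by rw [hcoe]]
    apply Set.Subset.antisymm
    · rintro e ⟨heE, hesupp⟩
      by_contra heF
      revert heE hesupp heF
      induction e using Sym2.ind with
      | _ u v =>
        intro heE hesupp heF
        rw [SimpleGraph.mem_edgeSet] at heE
        have hu : u ∈ edgeSupport F := hesupp u (by simp)
        have hv : v ∈ edgeSupport F := hesupp v (by simp)
        have hreach := hconn.preconnected ⟨u, hu⟩ ⟨v, hv⟩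
        have := hreach.map (SimpleGraph.Embedding.induce (edgeSupport F)).toHom
        exact hflat.2 u v heE heF this
    · intro e he
      refine ⟨hflat.1 he, ?_⟩
      intro v hv
      exact ⟨e, he, hv⟩

end Setup


theorem bijOn_edgesIn (n m : ℕ) (ε : ℚ) (hm : 2 ≤ m) (hmn : m < n) (hn : 4 ≤ n)
    (hε0 : 0 < ε) (hε1 : ε < 1 / ((n : ℚ) - m))
    (w : ℕ → ℚ) (hw : ∀ i, 1 ≤ i → i ≤ n → w i = if i ≤ m then 1 else ε) :
    Set.BijOn (fun S : Finset ℕ => edgesIn n w (↑S : Set ℕ))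
      {S : Finset ℕ | S ⊆ Finset.Icc 2 n ∧ 1 < ∑ i ∈ S, w i}
      {F : Set (Sym2 ℕ) | F.Nonempty ∧ IsFlat n w F ∧ OneConnected F} := by
  have h : Setup n m ε w := ⟨hm, hmn, hε0, hε1, hw⟩
  refine ⟨?_, ?_, ?_⟩
  · rintro S ⟨hS, hsum⟩
    obtain ⟨i, hiS, j, hjS, him, hij⟩ := h.ex_heavy_pair hS hsum
    exact ⟨⟨s(i, j), h.mem_edgesIn hS hiS hjS hij (Or.inl him)⟩,
      Setup.edgesIn_flat (S := S),
      h.edgesIn_oneConnected hS hiS him hjS hij⟩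
  · rintro S₁ ⟨hS₁, hsum₁⟩ S₂ ⟨hS₂, hsum₂⟩ heq
    simp only at heq
    obtain ⟨i₁, hi₁, j₁, hj₁, him₁, hij₁⟩ := h.ex_heavy_pair hS₁ hsum₁
    obtain ⟨i₂, hi₂, j₂, hj₂, him₂, hij₂⟩ := h.ex_heavy_pair hS₂ hsum₂
    apply Finset.coe_injective
    calc (↑S₁ : Set ℕ) = edgeSupport (edgesIn n w (↑S₁ : Set ℕ)) :=
          (h.support_edgesIn hS₁ hi₁ him₁ hj₁ hij₁).symm
      _ = edgeSupport (edgesIn n w (↑S₂ : Set ℕ)) := by rw [heq]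
      _ = (↑S₂ : Set ℕ) := h.support_edgesIn hS₂ hi₂ him₂ hj₂ hij₂
  · rintro F ⟨hFne, hflat, hconn⟩
    obtain ⟨S, hmem, hSF⟩ := h.surj_aux hFne hflat hconn
    exact ⟨S, hmem, hSF⟩


end aux
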